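/- Fix an integer q ≥ 2 and an alphabet Σ_q of size q. Let n, ℓ, p be integers with 2 ≤ p ≤ ℓ and n ≥ 2ℓ − p + 1. If a_q(n+1, ℓ, p) ≥ q^n (i.e., an ℓ-window p-least-period avoiding code of length n+1 with a single redundancy symbol exists), then ℓ ≥ log_q(n − 2ℓ + p) + p − 3.5 (an inequality of real numbers). -/

import Mathlib

/-- `p` is a period of the vector `s = (s_1, …, s_n)` (0-indexed here):
`s_i = s_{i+p}` for all valid indices. -/
def IsPeriod {α : Type*} {n : ℕ} (s : Fin n → α) (p : ℕ) : Prop :=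
  ∀ i : ℕ, ∀ h : i + p < n,
    s ⟨i, lt_of_le_of_lt (Nat.le_add_right i p) h⟩ = s ⟨i + p, h⟩

/-- The window of length `ℓ` of `s` starting at (0-indexed) position `i`. -/
def window {α : Type*} {n : ℕ} (s : Fin n → α) (i ℓ : ℕ) (h : i + ℓ ≤ n) :
    Fin ℓ → α :=
  fun j => s ⟨i + j, Nat.lt_of_lt_of_le (Nat.add_lt_add_left j.isLt i) h⟩

/-- `s` is an `ℓ`-window `p`-least-period avoiding vector: no window of
length `ℓ` has any period `p'` with `1 ≤ p' < p`. -/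
def LPAvoiding {α : Type*} {n : ℕ} (ℓ p : ℕ) (s : Fin n → α) : Prop :=
  ∀ i : ℕ, ∀ h : i + ℓ ≤ n, ∀ p', 1 ≤ p' → p' < p →
    ¬ IsPeriod (window s i ℓ h) p'

/-- `s` is an `ℓ`-window `p`-period avoiding vector: no window of
length `ℓ` has period `p`. -/
def PAvoiding {α : Type*} {n : ℕ} (ℓ p : ℕ) (s : Fin n → α) : Prop :=
  ∀ i : ℕ, ∀ h : i + ℓ ≤ n, ¬ IsPeriod (window s i ℓ h) p

/-- `s` satisfies the `k`-RLL constraint w.r.t. the zero symbol `z`: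
no window of length `k` consists entirely of `z`. -/
def RLLok {α : Type*} {n : ℕ} (z : α) (k : ℕ) (s : Fin n → α) : Prop :=
  ∀ i : ℕ, ∀ h : i + k ≤ n, ∃ j : Fin k, window s i k h j ≠ z


lemma congr_mk {α : Type*} {n : ℕ} (s : Fin n → α) {a b : ℕ}
    (ha : a < n) (hb : b < n) (h : a = b) : s ⟨a, ha⟩ = s ⟨b, hb⟩ := by
  subst h; rfl

open Finset in
lemma rll_rec (Sigma : Type*) [Fintype Sigma] (z : Sigma)
    (t m : ℕ) (ht : 1 ≤ t) (htm : t ≤ m) :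
    Nat.card {v : Fin m → Sigma // RLLok z t v} ≤
      ∑ k ∈ Finset.range t, (Fintype.card Sigma - 1) *
        Nat.card {w : Fin (m - 1 - k) → Sigma // RLLok z t w} := by
  classical
  -- the extension of a vector by `z`'s
  let ext : (Fin m → Sigma) → ℕ → Sigma := fun v i => if h : i < m then v ⟨i, h⟩ else z
  -- codomain
  let C := (k : Fin t) × ({a : Sigma // a ≠ z} ×
      {w : Fin (m - 1 - (k : ℕ)) → Sigma // RLLok z t w})
  -- existence of a non-z coordinate
  have hex : ∀ v : {v : Fin m → Sigma // RLLok z t v}, ∃ i, ext v.1 i ≠ z := by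
    rintro ⟨v, hv⟩
    obtain ⟨j, hj⟩ := hv 0 (by omega)
    refine ⟨j.1, ?_⟩
    have hjm : (j : ℕ) < m := by omega
    simpa [ext, hjm, window, Nat.zero_add] using hj
  let K : {v : Fin m → Sigma // RLLok z t v} → ℕ := fun v => Nat.find (hex v)
  have hKnz : ∀ v, ext v.1 (K v) ≠ z := fun v => Nat.find_spec (hex v)
  have hKz : ∀ v i, i < K v → ext v.1 i = z := by
    intro v i hi
    by_contra hne
    have hle : K v ≤ i := Nat.find_le hne
    omega
  have hKm : ∀ v, K v < m := by
    intro v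
    by_contra hge
    exact hKnz v (by simp [ext, show ¬ (K v < m) from hge])
  have hKt : ∀ v, K v < t := by
    rintro v
    by_contra hge
    obtain ⟨j, hj⟩ := v.2 0 (by omega)
    have hjm : (j : ℕ) < m := by omega
    have : ext v.1 j.1 ≠ z := by simpa [ext, hjm, window, Nat.zero_add] using hj
    have hle : K v ≤ j.1 := Nat.find_le this
    omega
  have hKval : ∀ v, ext v.1 (K v) = v.1 ⟨K v, hKm v⟩ := by
    intro v; simp [ext, hKm v]
  -- tail map
  let W : ∀ v : {v : Fin m → Sigma // RLLok z t v}, Fin (m - 1 - K v) → Sigma :=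
    fun v j => v.1 ⟨K v + 1 + j.1, by have := j.isLt; omega⟩
  have hW : ∀ v, RLLok z t (W v) := by
    intro v i hi
    obtain ⟨j, hj⟩ := v.2 (K v + 1 + i) (by omega)
    refine ⟨j, ?_⟩
    have h1 : window (W v) i t hi j = v.1 ⟨K v + 1 + (i + j.1), by have := j.isLt; omega⟩ :=
      rfl
    have h2 : window v.1 (K v + 1 + i) t (by omega) j
        = v.1 ⟨K v + 1 + i + j.1, by have := j.isLt; omega⟩ := rfl
    rw [h1, congr_mk v.1 _ (by have := j.isLt; omega) (by omega : K v + 1 + (i + j.1) = K v + 1 + i + j.1), ← h2]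
    exact hj
  -- the injection
  let G : {v : Fin m → Sigma // RLLok z t v} → C := fun v =>
    ⟨⟨K v, hKt v⟩, ⟨⟨v.1 ⟨K v, hKm v⟩, by rw [← hKval v]; exact hKnz v⟩, ⟨W v, hW v⟩⟩⟩
  -- decoding
  let decode : C → ℕ → Sigma := fun c i =>
    if i < (c.1 : ℕ) then z else if i = (c.1 : ℕ) then c.2.1.1
    else if h : i - (c.1 : ℕ) - 1 < m - 1 - (c.1 : ℕ) then c.2.2.1 ⟨i - (c.1 : ℕ) - 1, h⟩ else z
  have hdec : ∀ v, ∀ i : ℕ, decode (G v) i = ext v.1 i := by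
    intro v i
    show (if i < K v then z else if i = K v then v.1 ⟨K v, hKm v⟩
      else if h : i - K v - 1 < m - 1 - K v then W v ⟨i - K v - 1, h⟩ else z) = ext v.1 i
    rcases lt_trichotomy i (K v) with h1 | h1 | h1
    · rw [if_pos h1, hKz v i h1]
    · subst h1
      rw [if_neg (lt_irrefl _), if_pos rfl, hKval v]
    · rw [if_neg (by omega), if_neg (by omega)]
      by_cases h2 : i < m
      · rw [dif_pos (by omega)]
        show v.1 _ = _
        simp only [ext, dif_pos h2]
        exact congr_mk _ _ _ (by omega)
      · rw [dif_neg (by omega)]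
        simp [ext, h2]
  have hGinj : Function.Injective G := by
    intro v v' h
    have hext : ∀ i, ext v.1 i = ext v'.1 i := by
      intro i
      rw [← hdec v i, ← hdec v' i, h]
    apply Subtype.ext
    funext j
    have := hext j.1
    simpa [ext, j.isLt] using this
  have hle : Nat.card {v : Fin m → Sigma // RLLok z t v} ≤ Nat.card C :=
    Nat.card_le_card_of_injective G hGinj
  have hC : Nat.card C = ∑ k ∈ Finset.range t, (Fintype.card Sigma - 1) *
      Nat.card {w : Fin (m - 1 - k) → Sigma // RLLok z t w} := by
    haveI : ∀ k : Fin t, Fintype {w : Fin (m - 1 - (k : ℕ)) → Sigma // RLLok z t w} :=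
      fun k => Fintype.ofFinite _
    rw [Nat.card_eq_fintype_card, Fintype.card_sigma, ← Fin.sum_univ_eq_sum_range]
    refine Finset.sum_congr rfl ?_
    intro k _
    rw [Fintype.card_prod]
    congr 1
    · rw [Fintype.card_subtype_compl, Fintype.card_subtype_eq]
    · rw [Nat.card_eq_fintype_card]
  omega

open Finset in
lemma rll_card_bound (q : ℕ) (hq : 2 ≤ q) (Sigma : Type*) [Fintype Sigma]
    (hcard : Fintype.card Sigma = q) (z : Sigma) (t : ℕ) (ht : 1 ≤ t) :
    ∀ m : ℕ, (Nat.card {v : Fin m → Sigma // RLLok z t v} : ℝ)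
      ≤ 2 * ((q : ℝ) * (1 - ((q : ℝ) ^ (t+1))⁻¹)) ^ m := by
  classical
  have hq1 : (2 : ℝ) ≤ (q : ℝ) := by exact_mod_cast hq
  have hq0 : (0 : ℝ) < q := by linarith
  set ε : ℝ := ((q : ℝ) ^ (t+1))⁻¹ with hεdef
  set lam : ℝ := (q : ℝ) * (1 - ε) with hlamdef
  have hε0 : 0 < ε := by positivity
  have hεq : ε * (q : ℝ) ^ (t+1) = 1 := by
    rw [hεdef]; field_simp
  have htq : (t : ℝ) * ε ≤ 2⁻¹ := by
    have h1 : t ≤ q ^ t := by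
      calc t ≤ 2 ^ t := (Nat.lt_two_pow_self (n := t)).le
        _ ≤ q ^ t := Nat.pow_le_pow_left hq t
    have h1' : (t : ℝ) ≤ (q : ℝ) ^ t := by exact_mod_cast h1
    have h2 : (q:ℝ) ^ (t+1) = (q:ℝ)^t * q := by ring
    rw [hεdef, h2]
    rw [mul_inv, ← mul_assoc]
    have hqt0 : (0:ℝ) < (q:ℝ)^t := by positivity
    have h3 : (t : ℝ) * ((q:ℝ)^t)⁻¹ ≤ 1 := by
      rw [mul_inv_le_iff₀ hqt0, one_mul]; exact h1'
    have h4 : ((q:ℝ))⁻¹ ≤ 2⁻¹ := by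
      apply inv_anti₀ <;> linarith
    calc (t : ℝ) * ((q:ℝ)^t)⁻¹ * ((q:ℝ))⁻¹ ≤ 1 * ((q:ℝ))⁻¹ := by
          apply mul_le_mul_of_nonneg_right h3 (by positivity)
      _ ≤ 2⁻¹ := by rw [one_mul]; exact h4
    
  have hε4 : ε ≤ 4⁻¹ := by
    have : (4:ℝ) ≤ (q:ℝ)^(t+1) := by
      calc (4:ℝ) = 2^2 := by norm_num
        _ ≤ (q:ℝ)^2 := by apply pow_le_pow_left₀ (by norm_num) hq1
        _ ≤ (q:ℝ)^(t+1) := by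
            apply pow_le_pow_right₀ (by linarith) (by omega)
    rw [hεdef]
    apply inv_anti₀ (by norm_num) this
  have hlam1 : (1:ℝ) < lam := by
    rw [hlamdef]
    nlinarith
  have hlamq : lam ≤ (q:ℝ) := by
    rw [hlamdef]; nlinarith
  have hlam0 : (0:ℝ) < lam := by linarith
  -- trivial bound
  have htriv : ∀ m : ℕ, (Nat.card {v : Fin m → Sigma // RLLok z t v} : ℝ) ≤ (q : ℝ) ^ m := by
    intro m
    have h1 : Nat.card {v : Fin m → Sigma // RLLok z t v} ≤ Nat.card (Fin m → Sigma) :=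
      Nat.card_le_card_of_injective Subtype.val Subtype.val_injective
    have h2 : Nat.card (Fin m → Sigma) = q ^ m := by
      rw [Nat.card_eq_fintype_card, Fintype.card_fun, Fintype.card_fin, hcard]
    rw [h2] at h1
    exact_mod_cast h1
  intro m
  induction m using Nat.strong_induction_on with
  | _ m ih =>
    by_cases hmt : m < t
    · -- base case
      have h1 : (Nat.card {v : Fin m → Sigma // RLLok z t v} : ℝ) ≤ (q : ℝ) ^ m := htriv m
      have h2 : (q:ℝ)^m ≤ 2 * lam ^ m := by
        have hb : (1 : ℝ) - m * ε ≤ (1 - ε) ^ m := by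
          have := one_add_mul_le_pow (a := -ε) (by linarith) m
          simpa [sub_eq_add_neg, mul_comm] using this
        have hm2 : (2⁻¹ : ℝ) ≤ (1 - ε)^m := by
          have : (m:ℝ) * ε ≤ (t:ℝ) * ε := by
            apply mul_le_mul_of_nonneg_right _ hε0.le
            exact_mod_cast hmt.le
          linarith
        have : lam ^ m = (q:ℝ)^m * (1-ε)^m := by
          rw [hlamdef, mul_pow]
        rw [this]
        have hqm : (0:ℝ) ≤ (q:ℝ)^m := by positivity
        nlinarith
      linarith
    · -- recursive case
      push_neg at hmt
      have hrec := rll_rec Sigma z t m ht hmt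
      have hcast : (Nat.card {v : Fin m → Sigma // RLLok z t v} : ℝ)
          ≤ ∑ k ∈ Finset.range t, ((q : ℝ) - 1) *
              (Nat.card {w : Fin (m - 1 - k) → Sigma // RLLok z t w} : ℝ) := by
        calc (Nat.card {v : Fin m → Sigma // RLLok z t v} : ℝ)
            ≤ ((∑ k ∈ Finset.range t, (Fintype.card Sigma - 1) *
              Nat.card {w : Fin (m - 1 - k) → Sigma // RLLok z t w} : ℕ) : ℝ) := by
              exact_mod_cast hrec
          _ = ∑ k ∈ Finset.range t, ((q : ℝ) - 1) *
              (Nat.card {w : Fin (m - 1 - k) → Sigma // RLLok z t w} : ℝ) := by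
              rw [Nat.cast_sum]
              refine Finset.sum_congr rfl fun k _ => ?_
              rw [Nat.cast_mul]
              congr 1
              rw [hcard] at *
              have : (1:ℕ) ≤ q := by omega
              push_cast [Nat.cast_sub this]
              ring
      have hsum : ∑ k ∈ Finset.range t, ((q : ℝ) - 1) *
              (Nat.card {w : Fin (m - 1 - k) → Sigma // RLLok z t w} : ℝ)
          ≤ ∑ k ∈ Finset.range t, ((q : ℝ) - 1) * (2 * lam ^ (m - 1 - k)) := by
        refine Finset.sum_le_sum fun k hk => ?_
        have hk' := Finset.mem_range.mp hk
        have hlt : m - 1 - k < m := by omega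
        exact mul_le_mul_of_nonneg_left (ih _ hlt) (by linarith)
      have heq : ∑ k ∈ Finset.range t, ((q : ℝ) - 1) * (2 * lam ^ (m - 1 - k))
          = 2 * ((q:ℝ) - 1) * ∑ j ∈ Finset.range t, lam ^ (m - t) * lam ^ j := by
        rw [← Finset.sum_range_reflect (fun j => lam ^ (m - t) * lam ^ j) t, Finset.mul_sum]
        refine Finset.sum_congr rfl fun k hk => ?_
        have hk' := Finset.mem_range.mp hk
        have h : m - 1 - k = (m - t) + (t - 1 - k) := by omega
        rw [h, pow_add]
        ring
      have hkey : ((q:ℝ) - 1) * ∑ j ∈ Finset.range t, lam ^ j ≤ lam ^ t := by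
        have hg : (∑ j ∈ Finset.range t, lam ^ j) * (lam - 1) = lam ^ t - 1 :=
          geom_sum_mul lam t
        have hlamt : lam ^ t ≤ (q:ℝ) ^ t := pow_le_pow_left₀ hlam0.le hlamq t
        have hql : (q : ℝ) - lam = (q:ℝ) * ε := by rw [hlamdef]; ring
        have hstep : lam ^ t * ((q:ℝ) - lam) ≤ (q:ℝ) - 1 := by
          rw [hql]
          have h5 : lam ^ t * ((q:ℝ) * ε) ≤ (q:ℝ)^t * ((q:ℝ) * ε) := by
            apply mul_le_mul_of_nonneg_right hlamt (by positivity)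
          have h6 : (q:ℝ)^t * ((q:ℝ) * ε) = 1 := by
            have : (q:ℝ)^t * (q:ℝ) = (q:ℝ)^(t+1) := by ring
            rw [show (q:ℝ)^t * ((q:ℝ) * ε) = (q:ℝ)^(t+1) * ε by rw [← this]; ring]
            rw [mul_comm]; exact hεq
          linarith
        -- (q-1) * S ≤ lam^t  ⟸  (q-1) * S * (lam-1) ≤ lam^t * (lam-1)
        have hl1 : (0:ℝ) < lam - 1 := by linarith
        rw [← mul_le_mul_iff_left₀ hl1]
        calc ((q:ℝ) - 1) * (∑ j ∈ Finset.range t, lam ^ j) * (lam - 1)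
            = ((q:ℝ) - 1) * (lam ^ t - 1) := by rw [mul_assoc, hg]
          _ ≤ lam ^ t * (lam - 1) := by nlinarith
      calc (Nat.card {v : Fin m → Sigma // RLLok z t v} : ℝ)
          ≤ ∑ k ∈ Finset.range t, ((q : ℝ) - 1) * (2 * lam ^ (m - 1 - k)) :=
            le_trans hcast hsum
        _ = 2 * (lam ^ (m-t) * (((q:ℝ) - 1) * ∑ j ∈ Finset.range t, lam ^ j)) := by
            rw [heq, ← Finset.mul_sum]; ring
        _ ≤ 2 * (lam ^ (m-t) * lam ^ t) := by
            have h0 : (0:ℝ) ≤ lam ^ (m-t) := by positivity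
            nlinarith
        _ = 2 * lam ^ m := by rw [← pow_add, Nat.sub_add_cancel hmt]

lemma lpa_card_le (Sigma : Type*) [Fintype Sigma] (z : Sigma)
    (n ℓ p : ℕ) (hp : 2 ≤ p) (hpl : p ≤ ℓ) (hln : ℓ ≤ n) :
    Nat.card {s : Fin (n+1) → Sigma // LPAvoiding ℓ p s} ≤
      Fintype.card Sigma ^ (p-1) *
        Nat.card {v : Fin (n+2-p) → Sigma // RLLok z (ℓ-p+1) v} := by
  classical
  set t := ℓ - p + 1 with hts
  set m := n + 2 - p with hms
  -- encoding map
  let V : (Fin (n+1) → Sigma) → Fin m → Sigma := fun s j =>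
    Equiv.swap (s ⟨j.1, by have := j.isLt; omega⟩) z (s ⟨j.1 + (p-1), by have := j.isLt; omega⟩)
  have hV : ∀ s : {s : Fin (n+1) → Sigma // LPAvoiding ℓ p s}, RLLok z t (V s.1) := by
    rintro ⟨s, hs⟩ i hi
    have h2 : i + ℓ ≤ n + 1 := by omega
    have hnp := hs i h2 (p-1) (by omega) (by omega)
    rw [IsPeriod] at hnp
    push_neg at hnp
    obtain ⟨j, hj, hne⟩ := hnp
    refine ⟨⟨j, by omega⟩, ?_⟩
    have e1 : window (V s) i t hi ⟨j, by omega⟩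
        = Equiv.swap (s ⟨i + j, by omega⟩) z (s ⟨i + j + (p-1), by omega⟩) := by
      show Equiv.swap (s _) z (s _) = _
      rw [congr_mk s _ (by omega : i + j < n + 1) rfl,
        congr_mk s _ (by omega : i + j + (p-1) < n + 1) rfl]
    rw [e1]
    intro hz
    have hab : s ⟨i + j + (p-1), by omega⟩ = s ⟨i + j, by omega⟩ :=
      (Equiv.swap (s ⟨i + j, by omega⟩) z).injective
        (hz.trans (Equiv.swap_apply_left _ z).symm)
    apply hne
    have e2 : window s i ℓ h2 ⟨j, by omega⟩ = s ⟨i + j, by omega⟩ := rfl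
    have e3 : window s i ℓ h2 ⟨j + (p-1), hj⟩ = s ⟨i + (j + (p-1)), by omega⟩ := rfl
    rw [e2, e3, congr_mk s _ (by omega : i + j + (p-1) < n + 1)
      (by omega : i + (j + (p-1)) = i + j + (p-1))]
    exact hab.symm
  let G : {s : Fin (n+1) → Sigma // LPAvoiding ℓ p s} →
      (Fin (p-1) → Sigma) × {v : Fin m → Sigma // RLLok z t v} := fun s =>
    ⟨fun i => s.1 ⟨i.1, by have := i.isLt; omega⟩, ⟨V s.1, hV s⟩⟩
  have hGinj : Function.Injective G := by
    rintro ⟨s, hs⟩ ⟨s', hs'⟩ h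
    rw [Prod.mk.injEq, Subtype.mk.injEq] at h
    obtain ⟨h1, h2⟩ := h
    have key : ∀ j : ℕ, ∀ hj : j < n + 1, s ⟨j, hj⟩ = s' ⟨j, hj⟩ := by
      intro j
      induction j using Nat.strong_induction_on with
      | _ j ih =>
        intro hj
        by_cases hc : j < p - 1
        · exact congrFun h1 ⟨j, hc⟩
        · have hj' : j - (p-1) < m := by omega
          have hv := congrFun h2 ⟨j - (p-1), hj'⟩
          have hb : s ⟨j - (p-1), by omega⟩ = s' ⟨j - (p-1), by omega⟩ :=
            ih (j - (p-1)) (by omega) (by omega)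
          have hv' : Equiv.swap (s ⟨j - (p-1), by omega⟩) z (s ⟨(j - (p-1)) + (p-1), by omega⟩)
              = Equiv.swap (s' ⟨j - (p-1), by omega⟩) z (s' ⟨(j - (p-1)) + (p-1), by omega⟩) := hv
          rw [hb] at hv'
          have := (Equiv.swap (s' ⟨j - (p-1), by omega⟩) z).injective hv'
          rw [congr_mk s _ hj (by omega : (j - (p-1)) + (p-1) = j),
            congr_mk s' _ hj (by omega : (j - (p-1)) + (p-1) = j)] at this
          exact this
    apply Subtype.ext
    funext jf
    exact key jf.1 jf.2
  calc Nat.card {s : Fin (n+1) → Sigma // LPAvoiding ℓ p s}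
      ≤ Nat.card ((Fin (p-1) → Sigma) × {v : Fin m → Sigma // RLLok z t v}) :=
        Nat.card_le_card_of_injective G hGinj
    _ = Fintype.card Sigma ^ (p-1) * Nat.card {v : Fin m → Sigma // RLLok z t v} := by
        rw [Nat.card_prod, Nat.card_eq_fintype_card, Fintype.card_fun, Fintype.card_fin]

set_option maxHeartbeats 1000000

/-- If an `(ℓ,p)`-LPA code of length `n+1` with a single redundancy symbol
exists (i.e. `a_q(n+1, ℓ, p) ≥ q^n`), with `2 ≤ p ≤ ℓ` and `n ≥ 2ℓ − p + 1`,
then `ℓ ≥ log_q(n − 2ℓ + p) + p − 3.5`. -/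
theorem single_redundancy_window_lower_bound
    {q : ℕ} (hq : 2 ≤ q) (Sigma : Type*) [Fintype Sigma]
    (hcard : Fintype.card Sigma = q)
    (n ℓ p : ℕ) (hp : 2 ≤ p) (hpl : p ≤ ℓ) (hn : 2 * ℓ - p + 1 ≤ n)
    (hcode : Nat.card {s : Fin (n + 1) → Sigma // LPAvoiding ℓ p s} ≥ q ^ n) :
    (ℓ : ℝ) ≥ Real.logb q ((n : ℝ) - 2 * (ℓ : ℝ) + (p : ℝ)) + (p : ℝ) - 3.5 := by
  classical
  have hcard1 : 0 < Fintype.card Sigma := by omega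
  obtain ⟨z⟩ : Nonempty Sigma := Fintype.card_pos_iff.mp hcard1
  have hln : ℓ ≤ n := by omega
  obtain ⟨t, htdef⟩ : ∃ t, t = ℓ - p + 1 := ⟨_, rfl⟩
  have ht : 1 ≤ t := by omega
  obtain ⟨M, hM⟩ : ∃ M, n = (p - 1) + M := ⟨n - (p - 1), by omega⟩
  have hm : n + 2 - p = M + 1 := by omega
  have h1 := lpa_card_le Sigma z n ℓ p hp hpl hln
  rw [← htdef, hcard, hm] at h1
  have h2 := rll_card_bound q hq Sigma hcard z t ht (M + 1)
  -- real-number abbreviations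
  have hq1 : (2 : ℝ) ≤ (q : ℝ) := by exact_mod_cast hq
  have hq0 : (0 : ℝ) < q := by linarith
  set ε : ℝ := ((q : ℝ) ^ (t + 1))⁻¹ with hεdef
  set lam : ℝ := (q : ℝ) * (1 - ε) with hlamdef
  have hε0 : 0 < ε := by positivity
  have hεq : ε * (q : ℝ) ^ (t + 1) = 1 := by rw [hεdef]; field_simp
  have hε1 : ε < 1 := by
    rw [hεdef]
    rw [inv_lt_one_iff₀]
    right
    calc (1:ℝ) < 2 := by norm_num
      _ ≤ (q:ℝ) := hq1
      _ ≤ (q:ℝ)^(t+1) := le_self_pow₀ (by linarith) (by omega)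
  have hlam0 : (0:ℝ) < lam := by rw [hlamdef]; nlinarith
  have hlamq : lam ≤ (q:ℝ) := by rw [hlamdef]; nlinarith
  -- the counting chain, in ℝ
  have hchain : (q:ℝ) ^ (p-1) * (q:ℝ) ^ M ≤ (q:ℝ) ^ (p-1) * (2 * lam ^ (M+1)) := by
    have hA : (q:ℝ) ^ n ≤ (q:ℝ) ^ (p-1) * (Nat.card {v : Fin (M+1) → Sigma // RLLok z t v} : ℝ) := by
      exact_mod_cast le_trans hcode h1
    have hB := h2
    calc (q:ℝ) ^ (p-1) * (q:ℝ) ^ M = (q:ℝ) ^ n := by rw [← pow_add, hM]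
      _ ≤ (q:ℝ) ^ (p-1) * (Nat.card {v : Fin (M+1) → Sigma // RLLok z t v} : ℝ) := hA
      _ ≤ (q:ℝ) ^ (p-1) * (2 * lam ^ (M+1)) := by
          apply mul_le_mul_of_nonneg_left hB (by positivity)
  have hMle : (q:ℝ) ^ M ≤ 2 * lam ^ (M+1) :=
    le_of_mul_le_mul_left hchain (by positivity)
  have hMle2 : (q:ℝ) ^ M ≤ (2 * q) * lam ^ M := by
    have : lam ^ (M+1) = lam ^ M * lam := pow_succ lam M
    have h3 : lam ^ M * lam ≤ lam ^ M * q := by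
      apply mul_le_mul_of_nonneg_left hlamq (by positivity)
    calc (q:ℝ)^M ≤ 2 * lam ^ (M+1) := hMle
      _ = 2 * (lam ^ M * lam) := by rw [this]
      _ ≤ 2 * (lam ^ M * q) := by linarith
      _ = (2 * q) * lam ^ M := by ring
  -- take logarithms
  have hlog : (M:ℝ) * Real.log q ≤ Real.log (2 * q) + M * Real.log lam := by
    have hl := Real.log_le_log (by positivity) hMle2
    rw [Real.log_pow] at hl
    rw [Real.log_mul (by positivity) (by positivity)] at hl
    rw [Real.log_pow] at hl
    linarith
  have hloglam : Real.log lam = Real.log q + Real.log (1 - ε) := by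
    rw [hlamdef, Real.log_mul (by positivity) (by linarith)]
  have hlogε : Real.log (1 - ε) ≤ -ε := by
    have := Real.log_le_sub_one_of_pos (show (0:ℝ) < 1 - ε by linarith)
    linarith
  have hMε : (M:ℝ) * ε ≤ Real.log (2 * q) := by
    have h4 : (M:ℝ) * ε ≤ (M:ℝ) * (-(Real.log (1 - ε))) := by
      apply mul_le_mul_of_nonneg_left (by linarith) (by positivity)
    have h5 : (M:ℝ) * (-(Real.log (1 - ε))) = M * Real.log q - M * Real.log lam := by
      rw [hloglam]; ring
    linarith
  have hM1 : (M:ℝ) ≤ (q:ℝ)^(t+1) * Real.log (2 * q) := by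
    calc (M:ℝ) = ((M:ℝ) * ε) * (q:ℝ)^(t+1) := by
          rw [mul_assoc, hεq, mul_one]
      _ ≤ Real.log (2 * q) * (q:ℝ)^(t+1) := by
          apply mul_le_mul_of_nonneg_right hMε (by positivity)
      _ = (q:ℝ)^(t+1) * Real.log (2 * q) := by ring
  -- log (2q) ≤ q √q
  have hlog2q : Real.log (2 * q) ≤ (q:ℝ) * Real.sqrt q := by
    have h2q0 : (0:ℝ) < 2 * q := by linarith
    have hs : Real.log (2 * q) = 2 * Real.log (Real.sqrt (2 * q)) := by
      rw [Real.log_sqrt (by linarith)]; ring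
    have hs2 : Real.log (Real.sqrt (2 * q)) ≤ Real.sqrt (2 * q) - 1 :=
      Real.log_le_sub_one_of_pos (Real.sqrt_pos.mpr h2q0)
    have hsplit : Real.sqrt (2 * q) = Real.sqrt 2 * Real.sqrt q :=
      Real.sqrt_mul (by norm_num) _
    have h2le : Real.sqrt 2 ≤ 1.5 := by
      nlinarith [Real.sq_sqrt (show (0:ℝ) ≤ 2 by norm_num), Real.sqrt_nonneg 2]
    have hu0 : (0:ℝ) ≤ Real.sqrt q := Real.sqrt_nonneg q
    have hu2 : Real.sqrt q ^ 2 = q := Real.sq_sqrt hq0.le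
    have hA0 : Real.log (2 * q) ≤ 2 * Real.sqrt (2 * (q:ℝ)) - 2 := by
      rw [hs]; linarith
    have hA : Real.log (2 * q) ≤ 2 * (Real.sqrt 2 * Real.sqrt q) - 2 := by
      rw [← hsplit]; exact hA0
    have hB : Real.sqrt 2 * Real.sqrt q ≤ 1.5 * Real.sqrt q :=
      mul_le_mul_of_nonneg_right h2le hu0
    have hC : 3 * Real.sqrt q - 2 ≤ (q:ℝ) * Real.sqrt q := by
      have hqu : (q:ℝ) * Real.sqrt q = Real.sqrt q ^ 2 * Real.sqrt q := by rw [hu2]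
      rw [hqu]
      nlinarith [mul_nonneg (sq_nonneg (Real.sqrt q - 1))
        (show (0:ℝ) ≤ Real.sqrt q + 2 by linarith)]
    linarith
  -- X ≤ q^(t+2) * √q
  have hX1 : (1:ℝ) ≤ (n:ℝ) - 2 * ℓ + p := by
    have hple : p ≤ 2 * ℓ := by omega
    have hc : ((2 * ℓ - p + 1 : ℕ) : ℝ) ≤ (n : ℝ) := Nat.cast_le.mpr hn
    rw [Nat.cast_add, Nat.cast_sub hple] at hc
    push_cast at hc ⊢
    linarith
  have hXM : (n:ℝ) - 2 * ℓ + p ≤ (M:ℝ) := by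
    have hMr : (n:ℝ) = ((p:ℝ) - 1) + M := by
      have : ((p - 1 + M : ℕ) : ℝ) = (n : ℝ) := by rw [← hM]
      rw [Nat.cast_add, Nat.cast_sub (by omega : 1 ≤ p)] at this
      push_cast at this ⊢
      linarith
    have hplr : (p:ℝ) ≤ (ℓ:ℝ) := Nat.cast_le.mpr hpl
    linarith
  have hXle : (n:ℝ) - 2 * ℓ + p ≤ (q:ℝ)^(t+2) * Real.sqrt q := by
    calc (n:ℝ) - 2 * ℓ + p ≤ (M:ℝ) := hXM
      _ ≤ (q:ℝ)^(t+1) * Real.log (2 * q) := hM1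
      _ ≤ (q:ℝ)^(t+1) * ((q:ℝ) * Real.sqrt q) := by
          apply mul_le_mul_of_nonneg_left hlog2q (by positivity)
      _ = (q:ℝ)^(t+2) * Real.sqrt q := by
          rw [pow_succ]; ring
  have hpow : (q:ℝ) ^ ((ℓ:ℝ) - p + 3.5) = (q:ℝ)^(t+2) * Real.sqrt q := by
    have hexp : (ℓ:ℝ) - p + 3.5 = ((t + 2 : ℕ) : ℝ) + (1/2 : ℝ) := by
      rw [htdef]
      push_cast [Nat.cast_sub hpl]
      ring
    rw [hexp, Real.rpow_add hq0, Real.rpow_natCast, Real.sqrt_eq_rpow]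
  have hq1' : (1:ℝ) < (q:ℝ) := by linarith
  have hX0 : (0:ℝ) < (n:ℝ) - 2 * ℓ + p := by linarith
  have hlogb : Real.logb q ((n:ℝ) - 2 * ℓ + p) ≤ (ℓ:ℝ) - p + 3.5 :=
    (Real.logb_le_iff_le_rpow hq1' hX0).mpr (by rw [hpow]; exact hXle)
  linarith
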